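/- Let X₁, X₂ be locally compact Polish spaces and let K : X₁ → X₂ be a Markov kernel such that the induced map on bounded measurable functions sends C₀(X₂) into C₀(X₁) (Feller kernel). Suppose M : M_p(X₁) → M_p(X₂), μ ↦ μK is injective on probability measures, i.e. μK = νK implies μ = ν. If a finite signed measure μ on X₁ annihilates KC₀(X₂) (i.e. ∫ (Kf) dμ = 0 for all f ∈ C₀(X₂)), then μK = 0 as a signed measure. -/

import Mathlib

open MeasureTheory ProbabilityTheory Set
open scoped ENNReal NNReal

/-- Key step of the density lemma: if a finite signed measure `μ = μ₁ - μ₂` on `X₁`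
annihilates `K C₀(X₂)` for a Feller Markov kernel `K : X₁ → X₂` whose induced map is
injective on probability measures, then `μK = 0`, i.e. `μ₁K = μ₂K`. -/
theorem signed_measure_annihilates_kernel {X₁ X₂ : Type*}
    [TopologicalSpace X₁] [PolishSpace X₁] [LocallyCompactSpace X₁]
    [MeasurableSpace X₁] [BorelSpace X₁]
    [TopologicalSpace X₂] [PolishSpace X₂] [LocallyCompactSpace X₂]
    [MeasurableSpace X₂] [BorelSpace X₂]
    (K : Kernel X₁ X₂) [IsMarkovKernel K]
    (hFeller : ∀ f : ZeroAtInftyContinuousMap X₂ ℝ,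
      ∃ g : ZeroAtInftyContinuousMap X₁ ℝ, ∀ x, g x = ∫ y, f y ∂(K x))
    (hinj : ∀ p q : Measure X₁, IsProbabilityMeasure p → IsProbabilityMeasure q →
      p.bind (fun a => K a) = q.bind (fun a => K a) → p = q)
    (μ₁ μ₂ : Measure X₁) [IsFiniteMeasure μ₁] [IsFiniteMeasure μ₂]
    (hann : ∀ f : ZeroAtInftyContinuousMap X₂ ℝ,
      ∫ x, (∫ y, f y ∂(K x)) ∂μ₁ = ∫ x, (∫ y, f y ∂(K x)) ∂μ₂) :
    μ₁.bind (fun a => K a) = μ₂.bind (fun a => K a) := by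
  set ν₁ := μ₁.bind (fun a => K a) with hν₁
  set ν₂ := μ₂.bind (fun a => K a) with hν₂
  have hKmeas : Measurable (fun a => (K a : Measure X₂)) := K.measurable
  have hfin : ∀ (μ : Measure X₁) [IsFiniteMeasure μ],
      IsFiniteMeasure (μ.bind (fun a => K a)) := by
    intro μ _
    constructor
    rw [Measure.bind_apply MeasurableSet.univ hKmeas.aemeasurable]
    simp only [measure_univ, lintegral_one]
    exact measure_lt_top μ _
  haveI : IsFiniteMeasure ν₁ := hfin μ₁
  haveI : IsFiniteMeasure ν₂ := hfin μ₂
  -- Key: equality of lower integrals of nonneg compactly supported continuous functions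
  have key : ∀ f : C(X₂, ℝ), HasCompactSupport f → (∀ y, f y ∈ Icc (0 : ℝ) 1) →
      ∫⁻ y, ENNReal.ofReal (f y) ∂ν₁ = ∫⁻ y, ENNReal.ofReal (f y) ∂ν₂ := by
    intro f hcs hbd
    set F : ZeroAtInftyContinuousMap X₂ ℝ := ⟨f, hcs.is_zero_at_infty⟩ with hF
    obtain ⟨G, hG⟩ := hFeller F
    have hfm : Measurable (fun y => ENNReal.ofReal (f y)) :=
      (ENNReal.continuous_ofReal.comp f.continuous).measurable
    have step : ∀ (μ : Measure X₁) [IsFiniteMeasure μ],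
        ∫⁻ y, ENNReal.ofReal (f y) ∂(μ.bind (fun a => K a))
          = ENNReal.ofReal (∫ x, (∫ y, f y ∂(K x)) ∂μ) := by
      intro μ _
      rw [Measure.lintegral_bind hKmeas.aemeasurable hfm.aemeasurable]
      have hinner : ∀ x, ∫⁻ y, ENNReal.ofReal (f y) ∂(K x)
          = ENNReal.ofReal (G x) := by
        intro x
        rw [hG x]
        have hint : Integrable f (K x) :=
          f.continuous.integrable_of_hasCompactSupport hcs
        rw [show (∫ y, F y ∂(K x)) = ∫ y, f y ∂(K x) from rfl]
        exact (ofReal_integral_eq_lintegral_ofReal hint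
          (Filter.Eventually.of_forall fun y => (hbd y).1)).symm
      simp only [hinner]
      have hGint : Integrable G μ := G.toBCF.integrable μ
      have hGnn' : ∀ x, (0:ℝ) ≤ G x := fun x => by
        rw [hG x]; exact integral_nonneg fun y => (hbd y).1
      have hGnn : 0 ≤ᵐ[μ] fun x => G x := Filter.Eventually.of_forall hGnn'
      rw [← ofReal_integral_eq_lintegral_ofReal hGint hGnn]
      congr 1
      refine integral_congr_ae (Filter.Eventually.of_forall fun x => ?_)
      exact hG x
    rw [step μ₁, step μ₂]
    congr 1
    exact hann F
  -- measures of compact sets agree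
  have hcompact : ∀ s : Set X₂, IsCompact s → ν₁ s = ν₂ s := by
    have main : ∀ (ρ₁ ρ₂ : Measure X₂) [IsFiniteMeasure ρ₁] [IsFiniteMeasure ρ₂],
        (∀ f : C(X₂, ℝ), HasCompactSupport f → (∀ y, f y ∈ Icc (0 : ℝ) 1) →
          ∫⁻ y, ENNReal.ofReal (f y) ∂ρ₁ = ∫⁻ y, ENNReal.ofReal (f y) ∂ρ₂) →
        ∀ s : Set X₂, IsCompact s → ρ₁ s ≤ ρ₂ s := by
      intro ρ₁ ρ₂ _ _ hkey s hs
      refine ENNReal.le_of_forall_pos_le_add fun ε hε hlt => ?_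
      have hρlt : ρ₂ s < ρ₂ s + ε :=
        ENNReal.lt_add_right (measure_lt_top ρ₂ s).ne (ENNReal.coe_ne_zero.mpr hε.ne')
      obtain ⟨U, hsU, hUopen, hUlt⟩ := Set.exists_isOpen_lt_of_lt s (ρ₂ s + ε) hρlt
      obtain ⟨f, hf1, hf0, hfcs, hfbd⟩ :=
        exists_continuous_one_zero_of_isCompact hs hUopen.isClosed_compl
          (Set.disjoint_compl_right_iff_subset.mpr hsU)
      have h₁ : ρ₁ s ≤ ∫⁻ y, ENNReal.ofReal (f y) ∂ρ₁ := by
        calc ρ₁ s = ∫⁻ y in s, 1 ∂ρ₁ := by rw [setLIntegral_one]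
          _ ≤ ∫⁻ y in s, ENNReal.ofReal (f y) ∂ρ₁ := by
              refine setLIntegral_mono
                ((ENNReal.continuous_ofReal.comp f.continuous).measurable) fun y hy => ?_
              simp [hf1 hy]
          _ ≤ ∫⁻ y, ENNReal.ofReal (f y) ∂ρ₁ := setLIntegral_le_lintegral _ _
      have h₂ : ∫⁻ y, ENNReal.ofReal (f y) ∂ρ₂ ≤ ρ₂ U := by
        calc ∫⁻ y, ENNReal.ofReal (f y) ∂ρ₂
            ≤ ∫⁻ y, U.indicator (fun _ => (1 : ℝ≥0∞)) y ∂ρ₂ := by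
              refine lintegral_mono fun y => ?_
              by_cases hy : y ∈ U
              · simp only [Set.indicator_of_mem hy]
                exact ENNReal.ofReal_le_one.mpr (hfbd y).2
              · have : f y = 0 := hf0 hy
                simp [this]
          _ = ρ₂ U := by
              simp [lintegral_indicator, hUopen.measurableSet]
      calc ρ₁ s ≤ ∫⁻ y, ENNReal.ofReal (f y) ∂ρ₁ := h₁
        _ = ∫⁻ y, ENNReal.ofReal (f y) ∂ρ₂ := hkey f hfcs hfbd
        _ ≤ ρ₂ U := h₂
        _ ≤ ρ₂ s + ε := hUlt.le
    intro s hs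
    exact le_antisymm (main ν₁ ν₂ key s hs)
      (main ν₂ ν₁ (fun f h1 h2 => (key f h1 h2).symm) s hs)
  -- conclude by inner regularity
  ext s hsmeas
  rw [hsmeas.measure_eq_iSup_isCompact ν₁, hsmeas.measure_eq_iSup_isCompact ν₂]
  exact iSup_congr fun t => iSup_congr fun _ => iSup_congr fun ht => hcompact t ht
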